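/- Let n ≥ 2 and let Φ = (φ_1, φ_2) : ℂ ⊕ M_n(ℂ) → ℂ ⊕ M_n(ℂ) be an additive map preserving mutual strong Birkhoff–James orthogonality in one direction, where φ_2(A) = A·Q for some invertible matrix Q ∈ M_n(ℂ) and φ_1 : ℂ → ℂ is additive. Then Q is a scalar multiple of a unitary matrix, ‖Q‖ = |φ_1(1)|, and either φ_1(λ) = φ_1(1)·λ for all λ ∈ ℂ or φ_1(λ) = φ_1(1)·conj(λ) for all λ ∈ ℂ. -/

import Mathlib

open Matrix
open scoped Matrix.Norms.L2Operator ComplexConjugate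


/-- `a` is strongly Birkhoff–James orthogonal to `b`. -/
def StrongBJ {𝔄 : Type*} [NormedRing 𝔄] (a b : 𝔄) : Prop :=
  ∀ c : 𝔄, ‖a‖ ≤ ‖a + b * c‖

/-- `a` and `b` are mutually strongly Birkhoff–James orthogonal. -/
def MutualBJ {𝔄 : Type*} [NormedRing 𝔄] (a b : 𝔄) : Prop :=
  StrongBJ a b ∧ StrongBJ b a

noncomputable section BJaux

variable {n : ℕ}

local notation "E" => EuclideanSpace ℂ (Fin n)
local notation "⟪" x ", " y "⟫" => @inner ℂ _ _ x y

namespace BJ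

/-- rank one matrix `|w⟩⟨y|`. -/
def ket (w y : EuclideanSpace ℂ (Fin n)) : Matrix (Fin n) (Fin n) ℂ :=
  Matrix.of fun i j => w i * conj (y j)

/-- matrix applied to a Euclidean vector. -/
def em (A : Matrix (Fin n) (Fin n) ℂ) (u : EuclideanSpace ℂ (Fin n)) :
    EuclideanSpace ℂ (Fin n) :=
  (EuclideanSpace.equiv (Fin n) ℂ).symm (A *ᵥ u)

lemma em_apply (A : Matrix (Fin n) (Fin n) ℂ) (u : E) (i : Fin n) :
    em A u i = ∑ j, A i j * u j := rfl

lemma em_add (A B : Matrix (Fin n) (Fin n) ℂ) (u : E) :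
    em (A + B) u = em A u + em B u := by
  ext i
  show ((A + B) *ᵥ u) i = (A *ᵥ u) i + (B *ᵥ u) i
  rw [Matrix.add_mulVec]; rfl

lemma em_smul (c : ℂ) (A : Matrix (Fin n) (Fin n) ℂ) (u : E) :
    em (c • A) u = c • em A u := by
  ext i
  show ((c • A) *ᵥ u) i = (c • (A *ᵥ u)) i
  rw [Matrix.smul_mulVec]

lemma em_mul (A B : Matrix (Fin n) (Fin n) ℂ) (u : E) :
    em (A * B) u = em A (em B u) := by
  ext i
  show ((A * B) *ᵥ u) i = (A *ᵥ (B *ᵥ u)) i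
  rw [Matrix.mulVec_mulVec]

lemma em_one (u : E) : em 1 u = u := by
  ext i
  show ((1 : Matrix (Fin n) (Fin n) ℂ) *ᵥ u) i = u i
  rw [Matrix.one_mulVec]

lemma em_ket (w y u : E) : em (ket w y) u = ⟪y, u⟫ • w := by
  ext i
  simp only [em, ket, EuclideanSpace.equiv, Matrix.mulVec, dotProduct, Matrix.of_apply,
    PiLp.inner_apply, RCLike.inner_apply, LinearEquiv.coe_symm_mk]
  show ∑ j, w i * conj (y j) * u j = (∑ j, u j * conj (y j)) • w i
  rw [smul_eq_mul, Finset.sum_mul]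
  exact Finset.sum_congr rfl fun j _ => by ring


lemma ket_conjTranspose (w y : E) : (ket w y)ᴴ = ket y w := by
  ext i j
  simp [ket, Matrix.conjTranspose_apply, mul_comm]

lemma ket_mul (w y : E) (M : Matrix (Fin n) (Fin n) ℂ) :
    ket w y * M = ket w (em Mᴴ y) := by
  ext i j
  simp only [ket, Matrix.mul_apply, Matrix.of_apply, em_apply, Matrix.conjTranspose_apply,
    map_sum, _root_.map_mul, RingHomCompTriple.comp_apply, RCLike.conj_conj, Finset.mul_sum]
  refine Finset.sum_congr rfl fun k _ => ?_
  simp only [RCLike.star_def, _root_.map_mul, RCLike.conj_conj]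
  ring

lemma ket_smul_right (w y : E) (c : ℂ) : ket w (c • y) = conj c • ket w y := by
  ext i j
  show w i * conj ((c • y) j) = (conj c • ket w y) i j
  simp [ket]
  ring

lemma mul_ket (M : Matrix (Fin n) (Fin n) ℂ) (w y : E) :
    M * ket w y = ket (em M w) y := by
  ext i j
  simp only [ket, Matrix.mul_apply, Matrix.of_apply, em_apply, Finset.sum_mul]
  exact Finset.sum_congr rfl fun k _ => by ring

lemma inner_em_left (M : Matrix (Fin n) (Fin n) ℂ) (a b : E) :
    ⟪em M a, b⟫ = ⟪a, em Mᴴ b⟫ := by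
  simp only [PiLp.inner_apply, RCLike.inner_apply, em_apply, Matrix.conjTranspose_apply,
    map_sum, _root_.map_mul, RingHomCompTriple.comp_apply, RCLike.conj_conj, Finset.mul_sum,
    Finset.sum_mul]
  rw [Finset.sum_comm]
  refine Finset.sum_congr rfl fun i _ => Finset.sum_congr rfl fun j _ => ?_
  simp only [RCLike.star_def, _root_.map_mul, RCLike.conj_conj]
  ring


lemma norm_em_le (A : Matrix (Fin n) (Fin n) ℂ) (u : E) : ‖em A u‖ ≤ ‖A‖ * ‖u‖ :=
  Matrix.l2_opNorm_mulVec A u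

lemma norm_em_le_opNorm (A : Matrix (Fin n) (Fin n) ℂ) {u : E} (hu : ‖u‖ = 1) :
    ‖em A u‖ ≤ ‖A‖ := by
  simpa [hu] using norm_em_le A u

lemma opNorm_le {A : Matrix (Fin n) (Fin n) ℂ} {K : ℝ} (hK : 0 ≤ K)
    (h : ∀ u : E, ‖em A u‖ ≤ K * ‖u‖) : ‖A‖ ≤ K := by
  rw [Matrix.l2_opNorm_def]
  exact ContinuousLinearMap.opNorm_le_bound _ hK h

lemma norm_comb {x v : E} (hx : ‖x‖ = 1) (hv : ‖v‖ = 1) (hxv : ⟪x, v⟫ = 0) (α β : ℂ) :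
    ‖α • x + β • v‖ ^ 2 = ‖α‖ ^ 2 + ‖β‖ ^ 2 := by
  rw [@norm_add_sq ℂ]
  simp [inner_smul_left, inner_smul_right, hxv, norm_smul, hx, hv]

lemma bessel {x v : E} (hx : ‖x‖ = 1) (hv : ‖v‖ = 1) (hxv : ⟪x, v⟫ = 0) (w : E) :
    ‖⟪x, w⟫‖ ^ 2 + ‖⟪v, w⟫‖ ^ 2 ≤ ‖w‖ ^ 2 := by
  have hvx : ⟪v, x⟫ = 0 := by
    rw [← inner_conj_symm, hxv, map_zero]
  have horth : Orthonormal ℂ ![x, v] := by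
    rw [orthonormal_iff_ite]
    intro i j
    fin_cases i <;> fin_cases j <;>
      simp [hxv, hvx, inner_self_eq_norm_sq_to_K, hx, hv]
  have h2 := horth.sum_inner_products_le (𝕜 := ℂ) w (s := Finset.univ)
  simpa [Fin.sum_univ_two] using h2

lemma ket_norm_le (w y : E) : ‖ket w y‖ ≤ ‖w‖ * ‖y‖ := by
  refine opNorm_le (by positivity) fun u => ?_
  rw [em_ket, norm_smul]
  calc ‖⟪y, u⟫‖ * ‖w‖ ≤ (‖y‖ * ‖u‖) * ‖w‖ := by
        gcongr; exact norm_inner_le_norm y u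
    _ = ‖w‖ * ‖y‖ * ‖u‖ := by ring

lemma ket_norm {w : E} (hw : ‖w‖ = 1) (y : E) : ‖ket w y‖ = ‖y‖ := by
  rcases eq_or_ne y 0 with rfl | hy
  · refine le_antisymm ?_ (by rw [norm_zero]; positivity)
    simpa [hw] using ket_norm_le w 0
  · refine le_antisymm (by simpa [hw] using ket_norm_le w y) ?_
    have hy' : ‖y‖ ≠ 0 := norm_ne_zero_iff.2 hy
    have hyn : ‖((‖y‖⁻¹ : ℝ) : ℂ) • y‖ = 1 := by
      rw [norm_smul]
      simp [hy']
    have h2 := norm_em_le_opNorm (ket w y) hyn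
    rw [em_ket, inner_smul_right, inner_self_eq_norm_sq_to_K] at h2
    rw [norm_smul, hw, mul_one] at h2
    simp only [norm_mul, norm_pow, RCLike.norm_ofReal, Complex.norm_real, Real.norm_eq_abs, abs_norm, abs_inv] at h2
    have hsc : ‖y‖⁻¹ * ‖y‖ ^ 2 = ‖y‖ := by field_simp
    rwa [hsc] at h2


lemma em_zero (A : Matrix (Fin n) (Fin n) ℂ) : em A 0 = 0 := by
  ext i
  show (A *ᵥ (0 : Fin n → ℂ)) i = 0
  rw [Matrix.mulVec_zero]
  rfl

lemma em_vec_add (A : Matrix (Fin n) (Fin n) ℂ) (a b : E) :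
    em A (a + b) = em A a + em A b := by
  ext i
  show (A *ᵥ (a + b : Fin n → ℂ)) i = (A *ᵥ a) i + (A *ᵥ b) i
  rw [Matrix.mulVec_add]
  rfl

lemma em_vec_sub (A : Matrix (Fin n) (Fin n) ℂ) (a b : E) :
    em A (a - b) = em A a - em A b := by
  ext i
  show (A *ᵥ (a - b : Fin n → ℂ)) i = (A *ᵥ a) i - (A *ᵥ b) i
  rw [Matrix.mulVec_sub]
  rfl

lemma em_vec_smul (A : Matrix (Fin n) (Fin n) ℂ) (c : ℂ) (a : E) :
    em A (c • a) = c • em A a := by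
  ext i
  show (A *ᵥ (c • (a : Fin n → ℂ))) i = (c • (A *ᵥ a)) i
  rw [Matrix.mulVec_smul]

lemma ket_mul_ket (w y p q : E) :
    ket w y * ket p q = ⟪y, p⟫ • ket w q := by
  rw [ket_mul, ket_conjTranspose, em_ket, ket_smul_right, inner_conj_symm]

lemma inner_self_c (w : E) : ⟪w, w⟫ = ((‖w‖ : ℝ) : ℂ) ^ 2 := by
  rw [inner_self_eq_norm_sq_to_K]; rfl

lemma le_of_sq_le_sq {a b : ℝ} (hb : 0 ≤ b) (h : a ^ 2 ≤ b ^ 2) (ha : 0 ≤ a) : a ≤ b := by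
  nlinarith

lemma norm_comb_ge_left {x v : E} (hx : ‖x‖ = 1) (hv : ‖v‖ = 1) (hxv : ⟪x, v⟫ = 0) (α β : ℂ) :
    ‖α‖ ≤ ‖α • x + β • v‖ := by
  have h := norm_comb hx hv hxv α β
  nlinarith [norm_nonneg (α • x + β • v), norm_nonneg α, norm_nonneg β]

lemma norm_comb_ge_right {x v : E} (hx : ‖x‖ = 1) (hv : ‖v‖ = 1) (hxv : ⟪x, v⟫ = 0) (α β : ℂ) :
    ‖β‖ ≤ ‖α • x + β • v‖ := by
  have h := norm_comb hx hv hxv α β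
  nlinarith [norm_nonneg (α • x + β • v), norm_nonneg α, norm_nonneg β]

end BJ

lemma bj_sqeq {a b : ℝ} (ha : 0 ≤ a) (hb : 0 ≤ b) (h : a ^ 2 = b ^ 2) : a = b := by
  nlinarith [sq_nonneg (a - b), sq_nonneg (a + b)]

lemma phi_form (φ : ℂ → ℂ) (hadd : ∀ x y : ℂ, φ (x + y) = φ x + φ y) {c : ℝ} (hc : 0 < c)
    (habs : ∀ z : ℂ, ‖φ z‖ = c * ‖z‖) :
    (∀ z : ℂ, φ z = φ 1 * z) ∨ (∀ z : ℂ, φ z = φ 1 * conj z) := by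
  set u := φ 1 with hu_def
  have hsq : ∀ z : ℂ, Complex.normSq (φ z) = c ^ 2 * Complex.normSq z := by
    intro z
    rw [← Complex.sq_norm, ← Complex.sq_norm z, habs]
    ring
  have hu : Complex.normSq u = c ^ 2 := by simpa using hsq 1
  have hc2 : (c : ℂ) ^ 2 ≠ 0 := pow_ne_zero _ (Complex.ofReal_ne_zero.2 hc.ne')
  have hcu : conj u * u = (c : ℂ) ^ 2 := by
    rw [mul_comm, Complex.mul_conj, hu]
    push_cast
    ring
  have hre : ∀ z : ℂ, (φ z * conj u).re = c ^ 2 * z.re := by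
    intro z
    have h1 : Complex.normSq (φ z + u) = c ^ 2 * Complex.normSq (z + 1) := by
      rw [← hadd z 1]; exact hsq (z + 1)
    rw [Complex.normSq_add, Complex.normSq_add, hsq z, hu] at h1
    simp only [Complex.normSq_one, _root_.map_one, mul_one] at h1
    linarith
  -- φ I = ± I * u
  have hiu : φ Complex.I * conj u = Complex.I * (c ^ 2 : ℂ) ∨
      φ Complex.I * conj u = -(Complex.I * (c ^ 2 : ℂ)) := by
    set s := φ Complex.I * conj u with hs
    have hsre : s.re = 0 := by
      rw [hs, hre Complex.I, Complex.I_re, mul_zero]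
    have hsnsq : Complex.normSq s = (c ^ 2) ^ 2 := by
      rw [hs, Complex.normSq_mul, Complex.normSq_conj, hu]
      have := hsq Complex.I
      simp only [Complex.normSq_I, mul_one] at this
      rw [this]; ring
    have him : s.im ^ 2 = (c ^ 2) ^ 2 := by
      have : Complex.normSq s = s.re ^ 2 + s.im ^ 2 := by
        rw [Complex.normSq_apply]; ring
      rw [this, hsre] at hsnsq
      linarith
    have him2 : s.im = c ^ 2 ∨ s.im = -(c ^ 2) := by
      have h0 : (s.im - c ^ 2) * (s.im + c ^ 2) = 0 := by nlinarith
      rcases mul_eq_zero.1 h0 with h | h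
      · exact Or.inl (by linarith)
      · exact Or.inr (by linarith)
    rcases him2 with h | h
    · left
      apply Complex.ext <;>
        simp [hsre, h, Complex.mul_re, Complex.mul_im, ← Complex.ofReal_pow]
    · right
      apply Complex.ext <;>
        simp [hsre, h, Complex.mul_re, Complex.mul_im, ← Complex.ofReal_pow]
  rcases hiu with hI | hI
  · -- linear case
    have hφI : φ Complex.I = Complex.I * u := by
      have h2 : φ Complex.I * (starRingEnd ℂ) u * u = Complex.I * (c ^ 2 : ℂ) * u := by rw [hI]
      rw [mul_assoc, hcu] at h2
      apply mul_right_cancel₀ hc2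
      linear_combination h2
    have him : ∀ z : ℂ, (φ z * conj u).im = c ^ 2 * z.im := by
      intro z
      have h1 : Complex.normSq (φ z + φ Complex.I) = c ^ 2 * Complex.normSq (z + Complex.I) := by
        rw [← hadd]; exact hsq _
      have hnsqI : Complex.normSq (φ Complex.I) = c ^ 2 := by
        have := hsq Complex.I
        simpa [Complex.normSq_I] using this
      rw [Complex.normSq_add, Complex.normSq_add, hsq z, hnsqI, hφI] at h1
      have hterm : (φ z * conj (Complex.I * u)).re = (φ z * conj u).im := by
        simp only [_root_.map_mul, Complex.conj_I, Complex.mul_re, Complex.mul_im, Complex.neg_re,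
          Complex.neg_im, Complex.I_re, Complex.I_im, mul_neg, neg_mul]
        ring
      have hterm2 : (z * conj Complex.I).re = z.im := by
        simp [Complex.conj_I, Complex.mul_re]
      rw [hterm, hterm2, Complex.normSq_I] at h1
      linarith
    left
    intro z
    have hw : φ z * conj u = (c ^ 2 : ℂ) * z := by
      apply Complex.ext
      · rw [hre z]
        simp [Complex.mul_re, ← Complex.ofReal_pow]
      · rw [him z]
        simp [Complex.mul_im, ← Complex.ofReal_pow]
    have h3 : φ z * (starRingEnd ℂ) u * u = (c ^ 2 : ℂ) * z * u := by rw [hw]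
    rw [mul_assoc, hcu] at h3
    apply mul_right_cancel₀ hc2
    linear_combination h3
  · -- conjugate case
    have hφI : φ Complex.I = -(Complex.I * u) := by
      have h2 : φ Complex.I * (starRingEnd ℂ) u * u = -(Complex.I * (c ^ 2 : ℂ)) * u := by
        rw [hI]
      rw [mul_assoc, hcu] at h2
      apply mul_right_cancel₀ hc2
      linear_combination h2
    have him : ∀ z : ℂ, (φ z * conj u).im = -(c ^ 2 * z.im) := by
      intro z
      have h1 : Complex.normSq (φ z + φ Complex.I) = c ^ 2 * Complex.normSq (z + Complex.I) := by
        rw [← hadd]; exact hsq _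
      have hnsqI : Complex.normSq (φ Complex.I) = c ^ 2 := by
        have := hsq Complex.I
        simpa [Complex.normSq_I] using this
      rw [Complex.normSq_add, Complex.normSq_add, hsq z, hnsqI, hφI] at h1
      have hterm : (φ z * conj (-(Complex.I * u))).re = -(φ z * conj u).im := by
        simp only [_root_.map_neg, _root_.map_mul, Complex.conj_I, Complex.mul_re, Complex.mul_im,
          Complex.neg_re, Complex.neg_im, Complex.I_re, Complex.I_im, mul_neg,
          neg_mul]
        ring
      have hterm2 : (z * conj Complex.I).re = z.im := by
        simp [Complex.conj_I, Complex.mul_re]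
      rw [hterm, hterm2, Complex.normSq_I] at h1
      linarith
    right
    intro z
    have hw : φ z * conj u = (c ^ 2 : ℂ) * conj z := by
      apply Complex.ext
      · rw [hre z]
        simp [Complex.mul_re, ← Complex.ofReal_pow]
      · rw [him z]
        simp [Complex.mul_im, ← Complex.ofReal_pow]
    have h3 : φ z * (starRingEnd ℂ) u * u = (c ^ 2 : ℂ) * conj z * u := by rw [hw]
    rw [mul_assoc, hcu] at h3
    apply mul_right_cancel₀ hc2
    linear_combination h3

set_option maxHeartbeats 2000000 in
theorem stmt12 {n : ℕ} (hn : 2 ≤ n) (φ₁ : ℂ → ℂ)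
    (hφadd : ∀ x y : ℂ, φ₁ (x + y) = φ₁ x + φ₁ y)
    (Q : Matrix (Fin n) (Fin n) ℂ) (hQ : IsUnit Q)
    (hpres : ∀ a b : ℂ × Matrix (Fin n) (Fin n) ℂ,
      MutualBJ a b → MutualBJ (φ₁ a.1, a.2 * Q) (φ₁ b.1, b.2 * Q)) :
    (∃ (c : ℂ) (U : Matrix (Fin n) (Fin n) ℂ),
        U ∈ Matrix.unitaryGroup (Fin n) ℂ ∧ Q = c • U) ∧
    ‖Q‖ = ‖φ₁ 1‖ ∧
    ((∀ z : ℂ, φ₁ z = φ₁ 1 * z) ∨ (∀ z : ℂ, φ₁ z = φ₁ 1 * (starRingEnd ℂ) z)) := by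
  classical
  have hn0 : (0 : ℕ) < n := by omega
  have hn1 : (1 : ℕ) < n := by omega
  set i0 : Fin n := ⟨0, hn0⟩ with hi0def
  set i1 : Fin n := ⟨1, hn1⟩ with hi1def
  have hi01 : i0 ≠ i1 := by simp [hi0def, hi1def, Fin.ext_iff]
  set e : Fin n → EuclideanSpace ℂ (Fin n) := fun i => EuclideanSpace.single i 1 with hedef
  have he : ∀ i, ‖e i‖ = 1 := fun i => by simp [hedef]
  have hee : ∀ i j, ⟪e i, e j⟫ = if i = j then 1 else 0 := by
    intro i j
    by_cases h : i = j
    · subst h; simp [hedef, EuclideanSpace.inner_single_left, EuclideanSpace.single_apply]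
    · simp [hedef, EuclideanSpace.inner_single_left, EuclideanSpace.single_apply, h, Ne.symm h]
  have hinner_e : ∀ (i : Fin n) (w : EuclideanSpace ℂ (Fin n)), ⟪e i, w⟫ = w i := by
    intro i w
    simp [hedef, EuclideanSpace.inner_single_left]
  have hene : ∀ i, e i ≠ 0 := by
    intro i h
    have := he i
    rw [h, norm_zero] at this
    norm_num at this
  set x : EuclideanSpace ℂ (Fin n) := e i0 with hxdef
  set v : EuclideanSpace ℂ (Fin n) := e i1 with hvdef
  have hx : ‖x‖ = 1 := he i0
  have hv : ‖v‖ = 1 := he i1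
  have hxv : ⟪x, v⟫ = 0 := by rw [hxdef, hvdef, hee]; simp [hi01]
  have hvx : ⟪v, x⟫ = 0 := by rw [hxdef, hvdef, hee]; simp [Ne.symm hi01]
  obtain ⟨Qu, hQu⟩ := hQ
  set R : Matrix (Fin n) (Fin n) ℂ := ↑Qu⁻¹ with hRdef
  have hQR : Q * R = 1 := by rw [← hQu, hRdef]; exact Qu.mul_inv
  have hRQ : R * Q = 1 := by rw [← hQu, hRdef]; exact Qu.inv_mul
  have hQH : ∀ u : EuclideanSpace ℂ (Fin n), u ≠ 0 → BJ.em Qᴴ u ≠ 0 := by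
    intro u hu h0
    apply hu
    have h1 : BJ.em (Rᴴ * Qᴴ) u = u := by
      rw [← Matrix.conjTranspose_mul, hQR, Matrix.conjTranspose_one, BJ.em_one]
    rw [BJ.em_mul, h0, BJ.em_zero] at h1
    exact h1.symm
  have hφ0 : φ₁ 0 = 0 := by
    have h := hφadd 0 0
    rw [add_zero] at h
    have h2 : φ₁ 0 + φ₁ 0 = φ₁ 0 + 0 := by rw [add_zero, ← h]
    exact add_left_cancel h2
  -- key cancellation scalar lemma
  have hz_of : ∀ (α β : ℂ) (wnorm : ℝ), 0 < wnorm → ‖β‖ = wnorm ^ 2 →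
      ‖α • x + β • v‖ ≤ wnorm * wnorm → α = 0 := by
    intro α β wn hwn hb hle
    have hcomb := BJ.norm_comb hx hv hxv α β
    have h0 : ‖α‖ = 0 := by nlinarith [norm_nonneg (α • x + β • v), norm_nonneg α]
    exact norm_eq_zero.1 h0
  -- Step 1: Q * Qᴴ kills orthonormal pairs
  have hgram : ∀ f g : EuclideanSpace ℂ (Fin n), ‖f‖ = 1 → ‖g‖ = 1 → ⟪f, g⟫ = 0 →
      ⟪BJ.em Qᴴ f, BJ.em Qᴴ g⟫ = 0 := by
    intro f g hf hg hfg
    have hBle : ‖BJ.ket x f + BJ.ket v g‖ ≤ 1 := by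
      refine BJ.opNorm_le zero_le_one fun u => ?_
      rw [BJ.em_add, BJ.em_ket, BJ.em_ket, one_mul]
      refine BJ.le_of_sq_le_sq (norm_nonneg u) ?_ (norm_nonneg _)
      rw [BJ.norm_comb hx hv hxv]
      exact BJ.bessel hf hg hfg u
    have hketxx : ‖BJ.ket x x‖ = 1 := by rw [BJ.ket_norm hx, hx]
    have hgg : ⟪g, g⟫ = (1 : ℂ) := by
      rw [BJ.inner_self_c, hg]; norm_num
    have hab : MutualBJ ((1 : ℂ), BJ.ket x x) ((0 : ℂ), BJ.ket x f + BJ.ket v g) := by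
      constructor
      · intro c
        have h2 : ‖((1 : ℂ), BJ.ket x x)‖ = 1 := by
          rw [Prod.norm_def]
          simp [hketxx]
        rw [h2, Prod.norm_def]
        have h1 : (((1 : ℂ), BJ.ket x x) + ((0 : ℂ), BJ.ket x f + BJ.ket v g) * c).1 = 1 := by
          simp
        rw [h1]
        calc (1:ℝ) = ‖(1:ℂ)‖ := by norm_num
          _ ≤ _ := le_max_left _ _
      · intro c
        have hev2 : BJ.em (BJ.ket x f + BJ.ket v g + BJ.ket x x * c.2) g =
            ⟪BJ.em c.2ᴴ x, g⟫ • x + (1:ℂ) • v := by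
          rw [BJ.em_add, BJ.em_add, BJ.em_ket, BJ.em_ket, BJ.ket_mul, BJ.em_ket,
            hfg, hgg, zero_smul, zero_add, add_comm]
        calc ‖((0 : ℂ), BJ.ket x f + BJ.ket v g)‖ = ‖BJ.ket x f + BJ.ket v g‖ := by
              rw [Prod.norm_def]; simp
          _ ≤ 1 := hBle
          _ = ‖(1:ℂ)‖ := by norm_num
          _ ≤ ‖⟪BJ.em c.2ᴴ x, g⟫ • x + (1:ℂ) • v‖ := BJ.norm_comb_ge_right hx hv hxv _ _
          _ = ‖BJ.em (BJ.ket x f + BJ.ket v g + BJ.ket x x * c.2) g‖ := by rw [hev2]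
          _ ≤ ‖BJ.ket x f + BJ.ket v g + BJ.ket x x * c.2‖ := BJ.norm_em_le_opNorm _ hg
          _ ≤ _ := by rw [Prod.norm_def]; exact le_max_right _ _
    have himg := (hpres _ _ hab).2
    have hp0 : BJ.em Qᴴ x ≠ 0 := hQH x (hene i0)
    have hpn : (0:ℝ) < ‖BJ.em Qᴴ x‖ := norm_pos_iff.2 hp0
    have hwg0 : BJ.em Qᴴ g ≠ 0 :=
      hQH g (by intro h; rw [h, norm_zero] at hg; norm_num at hg)
    have hwgn : (0:ℝ) < ‖BJ.em Qᴴ g‖ := norm_pos_iff.2 hwg0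
    have hmm : (BJ.ket x f + BJ.ket v g) * Q = BJ.ket x (BJ.em Qᴴ f) + BJ.ket v (BJ.em Qᴴ g) := by
      rw [add_mul, BJ.ket_mul, BJ.ket_mul]
    have hkill : (BJ.ket x x * Q) *
        ((-(((‖BJ.em Qᴴ x‖ ^ 2 : ℝ) : ℂ))⁻¹) • BJ.ket (BJ.em Qᴴ x) (BJ.em Qᴴ f)) =
        -(BJ.ket x (BJ.em Qᴴ f)) := by
      rw [BJ.ket_mul, Matrix.mul_smul, BJ.ket_mul_ket, smul_smul, BJ.inner_self_c]
      have hsc : (-(((‖BJ.em Qᴴ x‖ ^ 2 : ℝ) : ℂ))⁻¹) * ((‖BJ.em Qᴴ x‖ : ℝ) : ℂ) ^ 2 = -1 := by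
        have hne : ((‖BJ.em Qᴴ x‖ : ℝ) : ℂ) ≠ 0 := by
          exact_mod_cast hpn.ne'
        push_cast
        field_simp
      rw [hsc, neg_one_smul]
    have himg2 := himg ((0 : ℂ),
      (-(((‖BJ.em Qᴴ x‖ ^ 2 : ℝ) : ℂ))⁻¹) • BJ.ket (BJ.em Qᴴ x) (BJ.em Qᴴ f))
    have hrhs : (φ₁ (0:ℂ), (BJ.ket x f + BJ.ket v g) * Q) + (φ₁ (1:ℂ), BJ.ket x x * Q) *
        ((0 : ℂ), (-(((‖BJ.em Qᴴ x‖ ^ 2 : ℝ) : ℂ))⁻¹) • BJ.ket (BJ.em Qᴴ x) (BJ.em Qᴴ f)) =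
        ((0:ℂ), BJ.ket v (BJ.em Qᴴ g)) := by
      have h1 : φ₁ 0 + φ₁ 1 * 0 = 0 := by rw [hφ0, mul_zero, add_zero]
      have h2 : (BJ.ket x f + BJ.ket v g) * Q + (BJ.ket x x * Q) *
          ((-(((‖BJ.em Qᴴ x‖ ^ 2 : ℝ) : ℂ))⁻¹) • BJ.ket (BJ.em Qᴴ x) (BJ.em Qᴴ f)) =
          BJ.ket v (BJ.em Qᴴ g) := by
        rw [hkill, hmm]
        abel
      exact Prod.ext h1 h2
    rw [hrhs] at himg2
    have hupper : ‖(φ₁ (0:ℂ), (BJ.ket x f + BJ.ket v g) * Q)‖ ≤ ‖BJ.em Qᴴ g‖ := by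
      refine le_trans himg2 ?_
      rw [Prod.norm_def]
      simp [BJ.ket_norm hv]
    have hlow : ‖BJ.em ((BJ.ket x f + BJ.ket v g) * Q) (BJ.em Qᴴ g)‖ ≤
        ‖BJ.em Qᴴ g‖ * ‖BJ.em Qᴴ g‖ := by
      calc ‖BJ.em ((BJ.ket x f + BJ.ket v g) * Q) (BJ.em Qᴴ g)‖
          ≤ ‖(BJ.ket x f + BJ.ket v g) * Q‖ * ‖BJ.em Qᴴ g‖ := BJ.norm_em_le _ _
        _ ≤ ‖(φ₁ (0:ℂ), (BJ.ket x f + BJ.ket v g) * Q)‖ * ‖BJ.em Qᴴ g‖ :=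
            mul_le_mul_of_nonneg_right
              (by rw [Prod.norm_def]; exact le_max_right _ _) (norm_nonneg _)
        _ ≤ ‖BJ.em Qᴴ g‖ * ‖BJ.em Qᴴ g‖ :=
            mul_le_mul_of_nonneg_right hupper (norm_nonneg _)
    rw [hmm, BJ.em_add, BJ.em_ket, BJ.em_ket, BJ.inner_self_c] at hlow
    refine hz_of _ _ ‖BJ.em Qᴴ g‖ hwgn ?_ hlow
    rw [norm_pow, Complex.norm_real, Real.norm_eq_abs, abs_norm]
  -- Step 2: entries of Q * Qᴴ
  have hentry : ∀ (M : Matrix (Fin n) (Fin n) ℂ) (i j : Fin n), ⟪e i, BJ.em M (e j)⟫ = M i j := by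
    intro M i j
    rw [hinner_e]
    show (∑ k, M i k * (e j) k) = M i j
    simp [hedef, EuclideanSpace.single_apply]
  have hgram_entry : ∀ i j : Fin n,
      ⟪BJ.em Qᴴ (e i), BJ.em Qᴴ (e j)⟫ = (Q * Qᴴ) i j := by
    intro i j
    rw [BJ.inner_em_left, Matrix.conjTranspose_conjTranspose, ← BJ.em_mul, hentry]
  have hoff : ∀ i j : Fin n, i ≠ j → ⟪BJ.em Qᴴ (e i), BJ.em Qᴴ (e j)⟫ = 0 := by
    intro i j hij
    exact hgram _ _ (he i) (he j) (by rw [hee]; simp [hij])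
  have hcQpos : (0:ℝ) < ‖BJ.em Qᴴ x‖ := norm_pos_iff.2 (hQH x (hene i0))
  have hdiag : ∀ i j : Fin n, i ≠ j →
      ⟪BJ.em Qᴴ (e i), BJ.em Qᴴ (e i)⟫ = ⟪BJ.em Qᴴ (e j), BJ.em Qᴴ (e j)⟫ := by
    intro i j hij
    have horthij : ⟪e i, e j⟫ = 0 := by rw [hee]; simp [hij]
    have horthji : ⟪e j, e i⟫ = 0 := by rw [hee]; simp [Ne.symm hij]
    have hs2 : (0:ℝ) < Real.sqrt 2 := by positivity
    have hsum2 : ‖e i + e j‖ ^ 2 = 2 := by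
      have h := BJ.norm_comb (he i) (he j) horthij 1 1
      simp at h
      linarith
    have hsub2 : ‖e i - e j‖ ^ 2 = 2 := by
      have h := BJ.norm_comb (he i) (he j) horthij 1 (-1)
      have h2 : (1:ℂ) • e i + (-1:ℂ) • e j = e i - e j := by
        simp [sub_eq_add_neg]
      rw [h2] at h
      simp at h
      linarith
    have hfn : ‖(((Real.sqrt 2)⁻¹ : ℝ) : ℂ) • (e i + e j)‖ = 1 := by
      rw [norm_smul]
      refine bj_sqeq (mul_nonneg (norm_nonneg _) (norm_nonneg _)) zero_le_one ?_
      rw [mul_pow, hsum2, Complex.norm_real, Real.norm_eq_abs,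
        abs_of_nonneg (by positivity : (0:ℝ) ≤ (Real.sqrt 2)⁻¹), inv_pow,
        Real.sq_sqrt (by norm_num : (0:ℝ) ≤ 2)]
      norm_num
    have hgn : ‖(((Real.sqrt 2)⁻¹ : ℝ) : ℂ) • (e i - e j)‖ = 1 := by
      rw [norm_smul]
      refine bj_sqeq (mul_nonneg (norm_nonneg _) (norm_nonneg _)) zero_le_one ?_
      rw [mul_pow, hsub2, Complex.norm_real, Real.norm_eq_abs,
        abs_of_nonneg (by positivity : (0:ℝ) ≤ (Real.sqrt 2)⁻¹), inv_pow,
        Real.sq_sqrt (by norm_num : (0:ℝ) ≤ 2)]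
      norm_num
    have hfg : ⟪(((Real.sqrt 2)⁻¹ : ℝ) : ℂ) • (e i + e j),
        (((Real.sqrt 2)⁻¹ : ℝ) : ℂ) • (e i - e j)⟫ = 0 := by
      rw [inner_smul_left, inner_smul_right]
      have : ⟪e i + e j, e i - e j⟫ = (0:ℂ) := by
        rw [inner_sub_right, inner_add_left, inner_add_left, hee, hee, hee, hee]
        simp [hij, Ne.symm hij]
      rw [this, mul_zero, mul_zero]
    have hkey := hgram _ _ hfn hgn hfg
    rw [BJ.em_vec_smul, BJ.em_vec_smul, BJ.em_vec_add, BJ.em_vec_sub,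
      inner_smul_left, inner_smul_right, inner_sub_right, inner_add_left, inner_add_left,
      hoff i j hij, hoff j i (Ne.symm hij)] at hkey
    have hc2 : ((((Real.sqrt 2)⁻¹ : ℝ) : ℂ)) ≠ 0 := by
      rw [ne_eq, Complex.ofReal_eq_zero]
      positivity
    rw [Complex.conj_ofReal] at hkey
    have hfin : ⟪BJ.em Qᴴ (e i), BJ.em Qᴴ (e i)⟫ + 0 -
        (0 + ⟪BJ.em Qᴴ (e j), BJ.em Qᴴ (e j)⟫) = 0 := by
      rcases mul_eq_zero.1 hkey with h | h
      · exact absurd h hc2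
      · rcases mul_eq_zero.1 h with h' | h'
        · exact absurd h' hc2
        · exact h'
    linear_combination hfin
  -- Step 3: Q * Qᴴ = d • 1 and friends
  have hQQH : Q * Qᴴ = (((‖BJ.em Qᴴ x‖ ^ 2 : ℝ)) : ℂ) • 1 := by
    ext i j
    rw [Matrix.smul_apply, Matrix.one_apply, ← hgram_entry]
    by_cases hij : i = j
    · subst hij
      simp only [if_pos rfl, smul_eq_mul, mul_one]
      by_cases hi0 : i = i0
      · subst hi0
        rw [BJ.inner_self_c, ← hxdef]
        push_cast
        ring
      · rw [hdiag i i0 hi0, BJ.inner_self_c, ← hxdef]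
        push_cast
        ring
    · rw [hoff i j hij, if_neg hij, smul_eq_mul, mul_zero]
  have hQHQ : Qᴴ * Q = (((‖BJ.em Qᴴ x‖ ^ 2 : ℝ)) : ℂ) • 1 := by
    have h1 : Qᴴ = (((‖BJ.em Qᴴ x‖ ^ 2 : ℝ)) : ℂ) • R := by
      calc Qᴴ = (R * Q) * Qᴴ := by rw [hRQ, one_mul]
        _ = R * (Q * Qᴴ) := by rw [Matrix.mul_assoc]
        _ = (((‖BJ.em Qᴴ x‖ ^ 2 : ℝ)) : ℂ) • R := by rw [hQQH, Matrix.mul_smul, Matrix.mul_one]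
    conv_lhs => rw [h1]
    rw [Matrix.smul_mul, hRQ]
  have hQHnorm : ∀ u : EuclideanSpace ℂ (Fin n), ‖BJ.em Qᴴ u‖ = ‖BJ.em Qᴴ x‖ * ‖u‖ := by
    intro u
    have h1 : ⟪BJ.em Qᴴ u, BJ.em Qᴴ u⟫ = (((‖BJ.em Qᴴ x‖ ^ 2 : ℝ)) : ℂ) * ⟪u, u⟫ := by
      rw [BJ.inner_em_left, Matrix.conjTranspose_conjTranspose, ← BJ.em_mul, hQQH,
        BJ.em_smul, BJ.em_one, inner_smul_right]
    rw [BJ.inner_self_c, BJ.inner_self_c u] at h1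
    have h2 : ‖BJ.em Qᴴ u‖ ^ 2 = ‖BJ.em Qᴴ x‖ ^ 2 * ‖u‖ ^ 2 := by exact_mod_cast h1
    refine bj_sqeq (norm_nonneg _) (mul_nonneg (norm_nonneg _) (norm_nonneg _)) ?_
    rw [h2]
    ring
  have hQnorm : ∀ u : EuclideanSpace ℂ (Fin n), ‖BJ.em Q u‖ = ‖BJ.em Qᴴ x‖ * ‖u‖ := by
    intro u
    have h1 : ⟪BJ.em Q u, BJ.em Q u⟫ = (((‖BJ.em Qᴴ x‖ ^ 2 : ℝ)) : ℂ) * ⟪u, u⟫ := by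
      rw [BJ.inner_em_left, ← BJ.em_mul, hQHQ, BJ.em_smul, BJ.em_one, inner_smul_right]
    rw [BJ.inner_self_c, BJ.inner_self_c u] at h1
    have h2 : ‖BJ.em Q u‖ ^ 2 = ‖BJ.em Qᴴ x‖ ^ 2 * ‖u‖ ^ 2 := by exact_mod_cast h1
    refine bj_sqeq (norm_nonneg _) (mul_nonneg (norm_nonneg _) (norm_nonneg _)) ?_
    rw [h2]
    ring
  have hMQ : ∀ M : Matrix (Fin n) (Fin n) ℂ, ‖M * Q‖ = ‖BJ.em Qᴴ x‖ * ‖M‖ := by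
    intro M
    refine le_antisymm ?_ ?_
    · refine BJ.opNorm_le (mul_nonneg (le_of_lt hcQpos) (norm_nonneg _)) fun u => ?_
      rw [BJ.em_mul]
      calc ‖BJ.em M (BJ.em Q u)‖ ≤ ‖M‖ * ‖BJ.em Q u‖ := BJ.norm_em_le _ _
        _ = ‖M‖ * (‖BJ.em Qᴴ x‖ * ‖u‖) := by rw [hQnorm]
        _ = (‖BJ.em Qᴴ x‖ * ‖M‖) * ‖u‖ := by ring
    · have hMle : ‖M‖ ≤ ‖BJ.em Qᴴ x‖⁻¹ * ‖M * Q‖ := by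
        refine BJ.opNorm_le (mul_nonneg (inv_nonneg.2 (le_of_lt hcQpos)) (norm_nonneg _))
          fun w => ?_
        have hw : BJ.em Q (BJ.em R w) = w := by rw [← BJ.em_mul, hQR, BJ.em_one]
        have h4 := hQnorm (BJ.em R w)
        rw [hw] at h4
        calc ‖BJ.em M w‖ = ‖BJ.em (M * Q) (BJ.em R w)‖ := by rw [BJ.em_mul, hw]
          _ ≤ ‖M * Q‖ * ‖BJ.em R w‖ := BJ.norm_em_le _ _
          _ = ‖BJ.em Qᴴ x‖⁻¹ * ‖M * Q‖ * (‖BJ.em Qᴴ x‖ * ‖BJ.em R w‖) := by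
              field_simp
          _ = ‖BJ.em Qᴴ x‖⁻¹ * ‖M * Q‖ * ‖w‖ := by rw [← h4]
      have h5 := mul_le_mul_of_nonneg_left hMle (le_of_lt hcQpos)
      calc ‖BJ.em Qᴴ x‖ * ‖M‖ ≤ ‖BJ.em Qᴴ x‖ * (‖BJ.em Qᴴ x‖⁻¹ * ‖M * Q‖) := h5
        _ = ‖M * Q‖ := by field_simp
  have hQn : ‖Q‖ = ‖BJ.em Qᴴ x‖ := by
    refine le_antisymm ?_ ?_
    · refine BJ.opNorm_le (le_of_lt hcQpos) fun u => ?_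
      rw [hQnorm]
    · have h6 := BJ.norm_em_le_opNorm Q hx
      rw [hQnorm, hx, mul_one] at h6
      exact h6
  -- Part 1: Q is a scalar multiple of a unitary
  have hcC : ((‖BJ.em Qᴴ x‖ : ℝ) : ℂ) ≠ 0 := by
    rw [ne_eq, Complex.ofReal_eq_zero]
    exact hcQpos.ne'
  have hpart1 : ∃ (c : ℂ) (U : Matrix (Fin n) (Fin n) ℂ),
      U ∈ Matrix.unitaryGroup (Fin n) ℂ ∧ Q = c • U := by
    refine ⟨((‖BJ.em Qᴴ x‖ : ℝ) : ℂ), (((‖BJ.em Qᴴ x‖ : ℝ) : ℂ))⁻¹ • Q, ?_, ?_⟩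
    · rw [Matrix.mem_unitaryGroup_iff, Matrix.star_eq_conjTranspose, Matrix.conjTranspose_smul,
        Matrix.smul_mul, Matrix.mul_smul, hQQH, smul_smul, smul_smul]
      have hsc2 : (((‖BJ.em Qᴴ x‖ : ℝ) : ℂ))⁻¹ * star ((((‖BJ.em Qᴴ x‖ : ℝ) : ℂ))⁻¹) *
          (((‖BJ.em Qᴴ x‖ ^ 2 : ℝ)) : ℂ) = 1 := by
        rw [Complex.star_def, map_inv₀, Complex.conj_ofReal]
        push_cast
        rw [pow_two]
        field_simp
      rw [hsc2, one_smul]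
    · rw [smul_smul, mul_inv_cancel₀ hcC, one_smul]
  have hxx1 : ⟪x, x⟫ = (1:ℂ) := by rw [BJ.inner_self_c, hx]; norm_num
  have hvv1 : ⟪v, v⟫ = (1:ℂ) := by rw [BJ.inner_self_c, hv]; norm_num
  have hnorm_s : ∀ r : ℝ, ‖((r : ℝ) : ℂ)‖ = |r| := fun r => by
    rw [Complex.norm_real, Real.norm_eq_abs]
  -- upper bound : ‖φ₁ λ‖ ≤ cQ * ‖λ‖
  have habs_le : ∀ lam : ℂ, ‖φ₁ lam‖ ≤ ‖BJ.em Qᴴ x‖ * ‖lam‖ := by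
    intro lam
    have hketnx : ‖((‖lam‖ : ℝ) : ℂ) • BJ.ket x x‖ = ‖lam‖ := by
      rw [norm_smul, BJ.ket_norm hx, hx, mul_one, hnorm_s, abs_norm]
    have hketnv : ‖((‖lam‖ : ℝ) : ℂ) • BJ.ket v v‖ = ‖lam‖ := by
      rw [norm_smul, BJ.ket_norm hv, hv, mul_one, hnorm_s, abs_norm]
    have hab : MutualBJ (lam, ((‖lam‖ : ℝ) : ℂ) • BJ.ket x x)
        (lam, ((‖lam‖ : ℝ) : ℂ) • BJ.ket v v) := by
      constructor
      · intro c
        have hev : BJ.em (((‖lam‖ : ℝ) : ℂ) • BJ.ket x x +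
            (((‖lam‖ : ℝ) : ℂ) • BJ.ket v v) * c.2) x =
            ((‖lam‖ : ℝ) : ℂ) • x + (((‖lam‖ : ℝ) : ℂ) * ⟪BJ.em c.2ᴴ v, x⟫) • v := by
          rw [BJ.em_add, BJ.em_smul, BJ.em_ket, hxx1, one_smul, Matrix.smul_mul, BJ.em_smul,
            BJ.ket_mul, BJ.em_ket, smul_smul]
        have h1 : ‖(lam, ((‖lam‖ : ℝ) : ℂ) • BJ.ket x x)‖ = ‖lam‖ := by
          rw [Prod.norm_def, hketnx, max_self]
        rw [h1, Prod.norm_def]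
        refine le_trans ?_ (le_max_right _ _)
        calc ‖lam‖ = ‖((‖lam‖ : ℝ) : ℂ)‖ := by rw [hnorm_s, abs_norm]
          _ ≤ ‖((‖lam‖ : ℝ) : ℂ) • x + (((‖lam‖ : ℝ) : ℂ) * ⟪BJ.em c.2ᴴ v, x⟫) • v‖ :=
              BJ.norm_comb_ge_left hx hv hxv _ _
          _ = ‖BJ.em (((‖lam‖ : ℝ) : ℂ) • BJ.ket x x +
              (((‖lam‖ : ℝ) : ℂ) • BJ.ket v v) * c.2) x‖ := by rw [hev]
          _ ≤ _ := BJ.norm_em_le_opNorm _ hx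
      · intro c
        have hev : BJ.em (((‖lam‖ : ℝ) : ℂ) • BJ.ket v v +
            (((‖lam‖ : ℝ) : ℂ) • BJ.ket x x) * c.2) v =
            (((‖lam‖ : ℝ) : ℂ) * ⟪BJ.em c.2ᴴ x, v⟫) • x + ((‖lam‖ : ℝ) : ℂ) • v := by
          rw [BJ.em_add, BJ.em_smul, BJ.em_ket, hvv1, one_smul, Matrix.smul_mul, BJ.em_smul,
            BJ.ket_mul, BJ.em_ket, smul_smul, add_comm]
        have h1 : ‖(lam, ((‖lam‖ : ℝ) : ℂ) • BJ.ket v v)‖ = ‖lam‖ := by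
          rw [Prod.norm_def, hketnv, max_self]
        rw [h1, Prod.norm_def]
        refine le_trans ?_ (le_max_right _ _)
        calc ‖lam‖ = ‖((‖lam‖ : ℝ) : ℂ)‖ := by rw [hnorm_s, abs_norm]
          _ ≤ ‖(((‖lam‖ : ℝ) : ℂ) * ⟪BJ.em c.2ᴴ x, v⟫) • x + ((‖lam‖ : ℝ) : ℂ) • v‖ :=
              BJ.norm_comb_ge_right hx hv hxv _ _
          _ = ‖BJ.em (((‖lam‖ : ℝ) : ℂ) • BJ.ket v v +
              (((‖lam‖ : ℝ) : ℂ) • BJ.ket x x) * c.2) v‖ := by rw [hev]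
          _ ≤ _ := BJ.norm_em_le_opNorm _ hv
    have himg := (hpres _ _ hab).1 ((-1 : ℂ), 0)
    have hrhs : (φ₁ lam, (((‖lam‖ : ℝ) : ℂ) • BJ.ket x x) * Q) +
        (φ₁ lam, (((‖lam‖ : ℝ) : ℂ) • BJ.ket v v) * Q) * ((-1 : ℂ), 0) =
        ((0 : ℂ), (((‖lam‖ : ℝ) : ℂ) • BJ.ket x x) * Q) := by
      refine Prod.ext ?_ ?_
      · show φ₁ lam + φ₁ lam * (-1) = 0
        ring
      · show (((‖lam‖ : ℝ) : ℂ) • BJ.ket x x) * Q +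
            ((((‖lam‖ : ℝ) : ℂ) • BJ.ket v v) * Q) * 0 = _
        rw [mul_zero, add_zero]
    rw [hrhs] at himg
    have hN : ‖(((‖lam‖ : ℝ) : ℂ) • BJ.ket x x) * Q‖ = ‖BJ.em Qᴴ x‖ * ‖lam‖ := by
      rw [hMQ, hketnx]
    calc ‖φ₁ lam‖ ≤ ‖(φ₁ lam, (((‖lam‖ : ℝ) : ℂ) • BJ.ket x x) * Q)‖ := by
          rw [Prod.norm_def]; exact le_max_left _ _
      _ ≤ ‖((0 : ℂ), (((‖lam‖ : ℝ) : ℂ) • BJ.ket x x) * Q)‖ := himg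
      _ = ‖BJ.em Qᴴ x‖ * ‖lam‖ := by
          rw [Prod.norm_def, hN, norm_zero]
          exact max_eq_right (mul_nonneg (le_of_lt hcQpos) (norm_nonneg _))
  -- lower bound
  have habs_ge : ∀ lam : ℂ, ‖BJ.em Qᴴ x‖ * ‖lam‖ ≤ ‖φ₁ lam‖ := by
    intro lam
    rcases eq_or_ne lam 0 with rfl | hlam
    · simp [hφ0]
    have hlamn : (0:ℝ) < ‖lam‖ := norm_pos_iff.2 hlam
    have key : ∀ t : ℝ, 0 < t → t < 1 → t * (‖BJ.em Qᴴ x‖ * ‖lam‖) ≤ ‖φ₁ lam‖ := by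
      intro t ht0 ht1
      have hketnt : ‖((t * ‖lam‖ : ℝ) : ℂ) • BJ.ket x x‖ = t * ‖lam‖ := by
        rw [norm_smul, BJ.ket_norm hx, hx, mul_one, hnorm_s,
          abs_of_nonneg (by positivity : (0:ℝ) ≤ t * ‖lam‖)]
      have hab : MutualBJ (lam, ((t * ‖lam‖ : ℝ) : ℂ) • BJ.ket x x)
          ((0 : ℂ), BJ.ket x x + BJ.ket v v) := by
        constructor
        · intro c
          have h1 : ‖(lam, ((t * ‖lam‖ : ℝ) : ℂ) • BJ.ket x x)‖ = ‖lam‖ := by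
            rw [Prod.norm_def, hketnt]
            exact max_eq_left (by nlinarith)
          have h2 : ((lam, ((t * ‖lam‖ : ℝ) : ℂ) • BJ.ket x x) +
              ((0 : ℂ), BJ.ket x x + BJ.ket v v) * c).1 = lam := by
            show lam + 0 * c.1 = lam
            ring
          rw [h1, Prod.norm_def, h2]
          exact le_max_left _ _
        · intro c
          have hBle : ‖BJ.ket x x + BJ.ket v v‖ ≤ 1 := by
            refine BJ.opNorm_le zero_le_one fun u => ?_
            rw [BJ.em_add, BJ.em_ket, BJ.em_ket, one_mul]
            refine BJ.le_of_sq_le_sq (norm_nonneg u) ?_ (norm_nonneg _)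
            rw [BJ.norm_comb hx hv hxv]
            exact BJ.bessel hx hv hxv u
          have hev : BJ.em (BJ.ket x x + BJ.ket v v +
              (((t * ‖lam‖ : ℝ) : ℂ) • BJ.ket x x) * c.2) v =
              (((t * ‖lam‖ : ℝ) : ℂ) * ⟪BJ.em c.2ᴴ x, v⟫) • x + (1:ℂ) • v := by
            rw [BJ.em_add, BJ.em_add, BJ.em_ket, BJ.em_ket, hxv, hvv1, zero_smul, zero_add,
              Matrix.smul_mul, BJ.em_smul, BJ.ket_mul, BJ.em_ket, smul_smul, add_comm]
          calc ‖((0 : ℂ), BJ.ket x x + BJ.ket v v)‖ = ‖BJ.ket x x + BJ.ket v v‖ := by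
                rw [Prod.norm_def]; simp
            _ ≤ 1 := hBle
            _ = ‖(1:ℂ)‖ := by norm_num
            _ ≤ ‖(((t * ‖lam‖ : ℝ) : ℂ) * ⟪BJ.em c.2ᴴ x, v⟫) • x + (1:ℂ) • v‖ :=
                BJ.norm_comb_ge_right hx hv hxv _ _
            _ = ‖BJ.em (BJ.ket x x + BJ.ket v v +
                (((t * ‖lam‖ : ℝ) : ℂ) • BJ.ket x x) * c.2) v‖ := by rw [hev]
            _ ≤ ‖BJ.ket x x + BJ.ket v v +
                (((t * ‖lam‖ : ℝ) : ℂ) • BJ.ket x x) * c.2‖ := BJ.norm_em_le_opNorm _ hv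
            _ ≤ _ := by rw [Prod.norm_def]; exact le_max_right _ _
      have himg := (hpres _ _ hab).1 ((0 : ℂ),
        (-((t * ‖lam‖ : ℝ) : ℂ) * (((‖BJ.em Qᴴ x‖ ^ 2 : ℝ)) : ℂ)⁻¹) •
          BJ.ket (BJ.em Qᴴ x) (BJ.em Qᴴ x))
      have hrhs : (φ₁ lam, (((t * ‖lam‖ : ℝ) : ℂ) • BJ.ket x x) * Q) +
          (φ₁ (0:ℂ), (BJ.ket x x + BJ.ket v v) * Q) * ((0 : ℂ),
            (-((t * ‖lam‖ : ℝ) : ℂ) * (((‖BJ.em Qᴴ x‖ ^ 2 : ℝ)) : ℂ)⁻¹) •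
              BJ.ket (BJ.em Qᴴ x) (BJ.em Qᴴ x)) = ((φ₁ lam : ℂ), 0) := by
        refine Prod.ext ?_ ?_
        · show φ₁ lam + φ₁ 0 * 0 = φ₁ lam
          rw [hφ0]
          ring
        · show (((t * ‖lam‖ : ℝ) : ℂ) • BJ.ket x x) * Q +
              ((BJ.ket x x + BJ.ket v v) * Q) *
              ((-((t * ‖lam‖ : ℝ) : ℂ) * (((‖BJ.em Qᴴ x‖ ^ 2 : ℝ)) : ℂ)⁻¹) •
                BJ.ket (BJ.em Qᴴ x) (BJ.em Qᴴ x)) = 0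
          rw [add_mul, BJ.ket_mul, BJ.ket_mul, add_mul, Matrix.mul_smul, Matrix.mul_smul,
            BJ.ket_mul_ket, BJ.ket_mul_ket, hgram v x hv hx hvx, zero_smul, smul_zero,
            add_zero, BJ.inner_self_c, smul_smul, Matrix.smul_mul, BJ.ket_mul]
          have hsc : -((t * ‖lam‖ : ℝ) : ℂ) * (((‖BJ.em Qᴴ x‖ ^ 2 : ℝ)) : ℂ)⁻¹ *
              ((‖BJ.em Qᴴ x‖ : ℝ) : ℂ) ^ 2 = -(((t * ‖lam‖ : ℝ) : ℂ)) := by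
            push_cast
            field_simp
          rw [hsc, neg_smul, add_neg_cancel]
      rw [hrhs] at himg
      have hlhs : t * (‖BJ.em Qᴴ x‖ * ‖lam‖) ≤
          ‖(φ₁ lam, (((t * ‖lam‖ : ℝ) : ℂ) • BJ.ket x x) * Q)‖ := by
        rw [Prod.norm_def]
        refine le_trans ?_ (le_max_right _ _)
        rw [hMQ, hketnt]
        nlinarith [hcQpos]
      refine le_trans hlhs (le_trans himg ?_)
      rw [Prod.norm_def, norm_zero]
      exact le_of_eq (max_eq_left (norm_nonneg _))
    by_contra hcon
    push_neg at hcon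
    have hL : (0:ℝ) < ‖BJ.em Qᴴ x‖ * ‖lam‖ := by positivity
    obtain ⟨t, ht1, ht2⟩ := exists_between ((div_lt_one hL).2 hcon)
    have ht0 : 0 < t := lt_of_le_of_lt (div_nonneg (norm_nonneg _) hL.le) ht1
    have := key t ht0 ht2
    rw [div_lt_iff₀ hL] at ht1
    linarith
  have habs : ∀ z : ℂ, ‖φ₁ z‖ = ‖BJ.em Qᴴ x‖ * ‖z‖ := by
    intro z
    exact le_antisymm (habs_le z) (habs_ge z)
  refine ⟨hpart1, ?_, ?_⟩
  · rw [hQn, habs 1]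
    simp
  · exact phi_form φ₁ hφadd hcQpos habs
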